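/- Let R_C > 0 and let Ω ⊆ ℂ be an open set which is a union of open balls of radius R_C. Then for every w in the frontier of Ω there exists a ∈ ℂ such that the open ball B(a, R_C) is contained in Ω and |a − w| = R_C (i.e., w lies on the boundary of that ball). -/

import Mathlib

open Metric Complex

theorem stmt1 (R_C : ℝ) (hC : 0 < R_C) (Ω : Set ℂ) (hopen : IsOpen Ω)
    (hunion : ∀ z ∈ Ω, ∃ a : ℂ, z ∈ ball a R_C ∧ ball a R_C ⊆ Ω) :
    ∀ w ∈ frontier Ω, ∃ a : ℂ, ball a R_C ⊆ Ω ∧ ‖a - w‖ = R_C := by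
  intro w hw
  have hwc : w ∈ closure Ω := hw.1
  have hwn : w ∉ Ω := by
    intro h
    exact hw.2 (by rwa [hopen.interior_eq])
  -- choose zₙ ∈ Ω with dist w zₙ < R_C/(n+1)
  have hz : ∀ n : ℕ, ∃ z ∈ Ω, dist w z < R_C / (n + 1) := by
    intro n
    exact Metric.mem_closure_iff.mp hwc _ (by positivity)
  choose z hzΩ hzd using hz
  choose a hza hball using fun n => hunion (z n) (hzΩ n)
  -- aₙ lies in closedBall w (2 R_C)
  have hmem : ∀ n, a n ∈ closedBall w (2 * R_C) := by
    intro n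
    have h1 : dist (z n) (a n) < R_C := mem_ball.mp (hza n)
    have h2 : dist w (z n) < R_C / (n + 1) := hzd n
    have h3 : R_C / (n + 1) ≤ R_C := by
      rw [div_le_iff₀ (by positivity)]
      nlinarith [Nat.cast_nonneg (α := ℝ) n]
    have := dist_triangle w (z n) (a n)
    simp only [mem_closedBall, dist_comm]
    rw [dist_comm] at this ⊢
    linarith
  obtain ⟨c, hc, φ, hφ, hlim⟩ :=
    (isCompact_closedBall w (2 * R_C)).tendsto_subseq hmem
  have hsub : ball c R_C ⊆ Ω := by
    intro x hx
    have hx' : dist x c < R_C := mem_ball.mp hx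
    have htend : Filter.Tendsto (fun k => dist x (a (φ k))) Filter.atTop
        (nhds (dist x c)) := (Filter.Tendsto.dist tendsto_const_nhds hlim)
    have : ∀ᶠ k in Filter.atTop, dist x (a (φ k)) < R_C :=
      htend.eventually_lt_const hx'
    obtain ⟨k, hk⟩ := this.exists
    exact hball (φ k) (mem_ball.mpr hk)
  refine ⟨c, hsub, ?_⟩
  rw [← Complex.dist_eq]
  have hle : dist c w ≤ R_C := by
    have htend : Filter.Tendsto (fun k => dist (a (φ k)) w) Filter.atTop
        (nhds (dist c w)) := hlim.dist tendsto_const_nhds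
    have hb : Filter.Tendsto (fun k => R_C + R_C / ((φ k : ℝ) + 1)) Filter.atTop
        (nhds (R_C + 0)) := by
      refine Filter.Tendsto.const_add _ ?_
      have h0 : Filter.Tendsto (fun n : ℕ => R_C * (1 / ((n : ℝ) + 1))) Filter.atTop
          (nhds (R_C * 0)) :=
        tendsto_one_div_add_atTop_nhds_zero_nat.const_mul R_C
      simp only [mul_zero] at h0
      have := h0.comp hφ.tendsto_atTop
      simpa [mul_one_div, Function.comp_def, div_eq_mul_inv] using this
    rw [add_zero] at hb
    refine le_of_tendsto_of_tendsto' htend hb fun k => ?_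
    have h1 : dist (z (φ k)) (a (φ k)) < R_C := mem_ball.mp (hza (φ k))
    have h2 : dist w (z (φ k)) < R_C / (φ k + 1) := hzd (φ k)
    have h3 := dist_triangle (a (φ k)) (z (φ k)) w
    rw [dist_comm (z (φ k))] at h1
    rw [dist_comm w] at h2
    linarith
  have hge : R_C ≤ dist c w := by
    by_contra h
    push_neg at h
    have hwb : w ∈ ball c R_C := by rw [mem_ball, dist_comm]; exact h
    exact hwn (hsub hwb)
  linarith
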